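/- Let Δ ≥ 3 and λ > 0, and define γ = (λ/(1+λ)) · Σ_{i=1}^{Δ−1} (1 − λ/(1+λ)^Δ)^{i−1}. If λ < 1.13/(Δ − 2), then γ < 1. -/

import Mathlib

set_option maxHeartbeats 1000000

open Finset

private lemma nn2 (n : ℕ) : (0:ℝ) ≤ (n:ℝ) * ((n:ℝ) - 1) := by
  rcases n with _ | k
  · norm_num
  · push_cast
    nlinarith [Nat.cast_nonneg (α := ℝ) k]

private lemma nn3 (n : ℕ) : (0:ℝ) ≤ (n:ℝ) * ((n:ℝ) - 1) * ((n:ℝ) - 2) := by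
  rcases n with _ | _ | k
  · norm_num
  · norm_num
  · push_cast
    nlinarith [Nat.cast_nonneg (α := ℝ) k, sq_nonneg ((k:ℝ)+1)]

private lemma trunc_upper (x : ℝ) (hx0 : 0 ≤ x) (hx1 : x ≤ 1) (i : ℕ) :
    (1 - x) ^ i ≤ 1 - (i:ℝ)*x + (i:ℝ)*((i:ℝ)-1)/2 * x^2 := by
  induction i with
  | zero => norm_num
  | succ n ih =>
    have h1 : (0:ℝ) ≤ 1 - x := by linarith
    have h2 : (1 - x)^(n+1) ≤ (1 - x) * (1 - (n:ℝ)*x + (n:ℝ)*((n:ℝ)-1)/2 * x^2) := by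
      rw [pow_succ, mul_comm]
      exact mul_le_mul_of_nonneg_left ih h1
    refine h2.trans ?_
    push_cast
    nlinarith [mul_nonneg (nn2 n) (pow_nonneg hx0 3)]

private lemma trunc_lower (x : ℝ) (hx0 : 0 ≤ x) (hx1 : x ≤ 1) (m : ℕ) :
    1 - (m:ℝ)*x + (m:ℝ)*((m:ℝ)-1)/2 * x^2 - (m:ℝ)*((m:ℝ)-1)*((m:ℝ)-2)/6 * x^3
      ≤ (1 - x) ^ m := by
  induction m with
  | zero => norm_num
  | succ n ih =>
    have h1 : (0:ℝ) ≤ 1 - x := by linarith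
    have h2 : (1 - x) * (1 - (n:ℝ)*x + (n:ℝ)*((n:ℝ)-1)/2 * x^2
        - (n:ℝ)*((n:ℝ)-1)*((n:ℝ)-2)/6 * x^3) ≤ (1 - x)^(n+1) := by
      rw [pow_succ]
      calc (1 - x) * (1 - (n:ℝ)*x + (n:ℝ)*((n:ℝ)-1)/2 * x^2
            - (n:ℝ)*((n:ℝ)-1)*((n:ℝ)-2)/6 * x^3)
          ≤ (1-x) * (1-x)^n := mul_le_mul_of_nonneg_left ih h1
        _ = (1-x)^n * (1-x) := by ring
    refine le_trans ?_ h2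
    push_cast
    nlinarith [mul_nonneg (nn3 n) (mul_nonneg (mul_nonneg hx0 hx0) (mul_nonneg hx0 hx0))]

private lemma sum_eval (x : ℝ) (m : ℕ) :
    ∑ i ∈ range m, (1 - (i:ℝ)*x + (i:ℝ)*((i:ℝ)-1)/2 * x^2)
      = (m:ℝ) - (m:ℝ)*((m:ℝ)-1)/2 * x + (m:ℝ)*((m:ℝ)-1)*((m:ℝ)-2)/6 * x^2 := by
  induction m with
  | zero => simp
  | succ n ih =>
    rw [sum_range_succ, ih]
    push_cast
    ring


private lemma key26a (s v : ℝ) (hs1 : 1 ≤ s) (h3v : 3*v ≤ s) (hv : 0 < v)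
    (hc : s + 13/100*v < 113/100) :
    (26:ℝ)/100 ≤ 1 - s + s*(s-v)/2 - s*(s-v)*(s-2*v)/6 := by
  have he : (0:ℝ) ≤ 113/100 - s - 13/100*v := by linarith
  have ht : (0:ℝ) ≤ s - 1 := by linarith
  have hu : (0:ℝ) ≤ s - 3*v := by linarith
  nlinarith [mul_nonneg he ht, mul_nonneg he hu, mul_nonneg ht hu,
    mul_nonneg (mul_nonneg he ht) hu, mul_nonneg he hv.le, mul_nonneg ht hv.le,
    mul_nonneg hu hv.le, sq_nonneg (s-1), mul_nonneg (mul_nonneg ht ht) hu,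
    mul_nonneg (mul_nonneg he he) hu]

private lemma key26b (s v : ℝ) (hs1 : 1 ≤ s) (h3v : 3*v ≤ s) (hv : 0 < v)
    (hc : s + 13/100*v < 113/100) :
    s - 1 < 26/100 * (s*(s-v)/2 - s*(s-v)*(s-2*v)/12) := by
  have he : (0:ℝ) ≤ 113/100 - s - 13/100*v := by linarith
  have ht : (0:ℝ) ≤ s - 1 := by linarith
  have hu : (0:ℝ) ≤ s - 3*v := by linarith
  nlinarith [mul_nonneg he ht, mul_nonneg he hu, mul_nonneg ht hu,
    mul_nonneg (mul_nonneg he ht) hu, mul_nonneg he hv.le, mul_nonneg ht hv.le,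
    mul_nonneg hu hv.le, sq_nonneg (s-1), mul_nonneg (mul_nonneg ht ht) hu,
    mul_nonneg (mul_nonneg he he) hu, mul_nonneg (mul_nonneg he he) he]

private lemma keym2 (v : ℝ) (hv : 0 < v) (h : 213*v < 113) :
    2*v - v^2*(1-v)^2 < 1 := by
  nlinarith [sq_nonneg (v*(1-v)), sq_nonneg (v - 113/213), sq_nonneg v,
    sq_nonneg (1-v), mul_pos hv hv]

/-- If `λ < 1.13/(Δ-2)` (with `Δ ≥ 3`, `λ > 0`), then the PRAR drift parameter
`γ = (λ/(1+λ)) · Σ_{i=1}^{Δ-1} (1 - λ/(1+λ)^Δ)^{i-1}` is less than 1. -/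
theorem stmt_4 (Δ : ℕ) (hΔ : 3 ≤ Δ) (lam : ℝ) (hlam : 0 < lam)
    (hrange : lam < 1.13 / ((Δ : ℝ) - 2)) :
    (lam / (1 + lam)) *
      ∑ i ∈ Finset.range (Δ - 1), (1 - lam / (1 + lam) ^ Δ) ^ i < 1 := by
  set m := Δ - 1 with hm
  have hm2 : 2 ≤ m := by omega
  have hΔm : Δ = m + 1 := by omega
  have hl1 : (0:ℝ) < 1 + lam := by linarith
  set v := lam / (1 + lam) with hv
  have hv0 : 0 < v := div_pos hlam hl1
  have hv1 : v < 1 := (div_lt_one hl1).mpr (by linarith)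
  have h1v : 1 - v = 1 / (1 + lam) := by
    rw [hv, eq_div_iff (ne_of_gt hl1)]
    field_simp
    ring
  set M := (m:ℝ) with hM
  have hM2 : (2:ℝ) ≤ M := by rw [hM]; exact_mod_cast hm2
  set w := (1 - v)^m with hw
  clear_value M
  have hw0 : 0 < w := pow_pos (by linarith) m
  have hw1 : w ≤ 1 := pow_le_one₀ (by linarith) (by linarith)
  have hpow : (0:ℝ) < (1 + lam)^m := pow_pos hl1 m
  clear_value w
  have hkey : lam / (1 + lam)^Δ = v * w := by
    rw [hΔm, hw, h1v, hv]
    rw [div_pow, one_pow, pow_succ, div_mul_div_comm, mul_one]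
    rw [mul_comm ((1+lam)^m) (1+lam)]
  clear_value v
  have hD2 : ((Δ:ℝ) - 2) = M - 1 := by rw [hΔm, hM]; push_cast; ring
  have hM1 : (0:ℝ) < M - 1 := by linarith
  have hlM : lam * (M - 1) < 113/100 := by
    rw [hD2] at hrange
    have := (lt_div_iff₀ hM1).mp hrange
    linarith
  have hvM : v * (M - 1) < 113/100 * (1 - v) := by
    rw [h1v, hv, div_mul_eq_mul_div, mul_one_div, div_lt_div_iff₀ hl1 hl1]
    nlinarith
  set s := M * v with hs
  clear_value s
  have hcon : s + 13/100 * v < 113/100 := by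
    rw [hs]; nlinarith
  set x₀ := v * w with hx
  clear_value x₀
  have hx0 : 0 ≤ x₀ := by
    rw [hx]
    positivity
  have hx1 : x₀ ≤ 1 := by rw [hx]; nlinarith
  have hsum : ∑ i ∈ range m, (1 - x₀)^i
      ≤ M - M*(M-1)/2 * x₀ + M*(M-1)*(M-2)/6 * x₀^2 := by
    calc ∑ i ∈ range m, (1 - x₀)^i
        ≤ ∑ i ∈ range m, (1 - (i:ℝ)*x₀ + (i:ℝ)*((i:ℝ)-1)/2 * x₀^2) :=
          Finset.sum_le_sum (fun i _ => trunc_upper x₀ hx0 hx1 i)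
      _ = _ := by rw [hM]; exact sum_eval x₀ m
  set A := M*(M-1)/2 * v^2 with hA
  set B := M*(M-1)*(M-2)/6 * v^3 with hB
  clear_value A B
  rw [hkey]
  have hgam : v * ∑ i ∈ range m, (1 - x₀)^i
      ≤ s - A*w + B*w^2 := by
    calc v * ∑ i ∈ range m, (1 - x₀)^i
        ≤ v * (M - M*(M-1)/2 * x₀ + M*(M-1)*(M-2)/6 * x₀^2) :=
          mul_le_mul_of_nonneg_left hsum hv0.le
      _ = s - A*w + B*w^2 := by rw [hx, hs, hA, hB]; ring
  refine lt_of_le_of_lt hgam ?_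
  -- Now prove `s - A*w + B*w^2 < 1`.
  have hA0 : 0 ≤ A := by
    rw [hA]
    have h1 : (0:ℝ) ≤ M*(M-1)/2 := by nlinarith
    exact mul_nonneg h1 (sq_nonneg v)
  have hAe : A = s*(s-v)/2 := by rw [hA, hs]; ring
  have hBe : B = s*(s-v)*(s-2*v)/6 := by rw [hB, hs]; ring
  have hw_low : 1 - s + A - B ≤ w := by
    have h := trunc_lower v hv0.le hv1.le m
    have e : 1 - s + A - B
        = 1 - M*v + M*(M-1)/2 * v^2 - M*(M-1)*(M-2)/6 * v^3 := by
      rw [hs, hA, hB]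
    rw [e, hw, hM]
    exact h
  have hw_up : w * (1 + s) ≤ 1 := by
    have h1 : 1 + M*v ≤ (1+v)^m := by
      have := one_add_mul_le_pow (a := v) (by linarith) m
      rw [hM]; linarith
    have h2 : w * (1+v)^m ≤ 1 := by
      rw [hw, ← mul_pow]
      exact pow_le_one₀ (by nlinarith) (by nlinarith)
    calc w*(1+s) ≤ w*(1+v)^m := by
          apply mul_le_mul_of_nonneg_left _ hw0.le
          rw [hs]; exact h1
      _ ≤ 1 := h2
  have hs113 : s < 113/100 := by nlinarith
  rcases eq_or_lt_of_le hm2 with hm2' | hm3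
  · -- m = 2 : here B = 0, A = v², s = 2v, w = (1-v)²
    have hM2' : M = 2 := by rw [hM, ← hm2']; norm_num
    have hB0 : B = 0 := by rw [hB, hM2']; ring
    have hA2 : A = v^2 := by rw [hA, hM2']; ring
    have hwv : w = (1-v)^2 := by rw [hw, ← hm2']
    have hs2 : s = 2*v := by rw [hs, hM2']
    have heq : s - A*w + B*w^2 = 2*v - v^2*(1-v)^2 := by
      rw [hB0, hA2, hwv, hs2]; ring
    rw [heq]
    have h213 : 213*v < 113 := by rw [hs2] at hcon; linarith
    exact keym2 v hv0 h213
  · -- m ≥ 3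
    have hM3 : (3:ℝ) ≤ M := by
      rw [hM]; exact_mod_cast hm3
    have h3v : 3*v ≤ s := by rw [hs]; nlinarith
    have hsv : (0:ℝ) ≤ s - v := by linarith
    have hs2v : (0:ℝ) ≤ s - 2*v := by linarith
    have hspos : (0:ℝ) < s := by linarith
    have hB0 : 0 ≤ B := by
      rw [hBe]
      nlinarith [mul_nonneg (mul_nonneg hspos.le hsv) hs2v]
    have h62 : 6*B = 2*A*(s-2*v) := by rw [hAe, hBe]; ring
    have hBA : B ≤ A := by
      nlinarith [mul_nonneg hA0 (show (0:ℝ) ≤ 3-(s-2*v) by linarith)]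
    by_cases hs1 : s < 1
    · -- easy regime
      have hBwA : B*w ≤ A := by
        have h' : B*w ≤ B*1 := mul_le_mul_of_nonneg_left hw1 hB0
        rw [mul_one] at h'
        linarith
      have hBw2 : B*w^2 ≤ A*w := by
        calc B*w^2 = B*w*w := by ring
          _ ≤ A*w := mul_le_mul_of_nonneg_right hBwA hw0.le
      linarith
    · push_neg at hs1
      have he : (0:ℝ) ≤ 113/100 - s - 13/100*v := by linarith
      have ht : (0:ℝ) ≤ s - 1 := by linarith
      have hu : (0:ℝ) ≤ s - 3*v := by linarith
      have hwhalf : w ≤ 1/2 := by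
        have h' : w*1 ≤ w*s := mul_le_mul_of_nonneg_left hs1 hw0.le
        have e' : w*(1+s) = w*1 + w*s := by ring
        rw [e'] at hw_up
        rw [mul_one] at h' hw_up
        linarith
      have hL26 : 26/100 ≤ 1 - s + A - B := by
        rw [hAe, hBe]
        exact key26a s v hs1 h3v hv0 hcon
      have hABpos : s - 1 < 26/100 * (A - B/2) := by
        have e2 : A - B/2 = s*(s-v)/2 - s*(s-v)*(s-2*v)/12 := by rw [hAe, hBe]; ring
        rw [e2]
        exact key26b s v hs1 h3v hv0 hcon
      have hAB2 : 0 ≤ A - B/2 := by linarith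
      have hBw2 : B*w ≤ B/2 := by
        have h' : B*w ≤ B*(1/2) := mul_le_mul_of_nonneg_left hwhalf hB0
        linarith
      have hABw : 0 ≤ A - B*w := by linarith
      have c1 : (1-s+A-B)*(A - B*w) ≤ w*(A - B*w) :=
        mul_le_mul_of_nonneg_right hw_low hABw
      have c2 : (1-s+A-B)*(A - B/2) ≤ (1-s+A-B)*(A - B*w) :=
        mul_le_mul_of_nonneg_left (by linarith) (by linarith)
      have c3 : 26/100*(A - B/2) ≤ (1-s+A-B)*(A - B/2) :=
        mul_le_mul_of_nonneg_right hL26 hAB2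
      have c4 : w*(A - B*w) = A*w - B*w^2 := by ring
      linarith
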